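/- Fix integers n ≥ 1, T ≥ 1, K ≥ 1. Assume time-invariant variable costs c_{k,t}^i = c_k^i ≥ 0 for all t, f_0 ≥ 0, and f_k > 0 for k ∈ {1,…,K}. For each item i let σ_i be the permutation of {1,…,K} with c_{σ_i(1)}^i ≤ … ≤ c_{σ_i(K)}^i and σ_i(l) < σ_i(l+1) whenever c_{σ_i(l)}^i = c_{σ_i(l+1)}^i, and let k0(i) = #{ k ∈ {1,…,K} : c_k^i < c_0^i }. Let m be the plan produced by the Cost-Comparison V-Priority policy: with I_{k,t}^i = I_{k,0}^i − Σ_{τ=1}^{t} m_{k,τ}^i, the greedy quantities are m̂_{σ_i(l),t}^i = min{ (S_t^i − Σ_{l'=1}^{l−1} I_{σ_i(l'),t−1}^i)⁺ , I_{σ_i(l),t−1}^i } for 1 ≤ l ≤ k0(i), m̂_{k,t}^i = 0 for the remaining FDCs k, and m̂_{0,t}^i = S_t^i − Σ_{k=1}^{K} m̂_{k,t}^i; at each period t, if Σ_{k=0}^{K} [ f_k·𝟙(Σ_{i=1}^{n} m̂_{k,t}^i > 0) + Σ_{i=1}^{n} c_k^i·m̂_{k,t}^i ] > f_0 + Σ_{i=1}^{n}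 c_0^i·S_t^i, then m_{0,t}^i = S_t^i and m_{k,t}^i = 0 for all i and all k ∈ {1,…,K}; otherwise m_{k,t}^i = m̂_{k,t}^i for all i and k. Then for every feasible plan m*, Cost(m) ≤ max{ (f_0 + Σ_{k=1}^{K} f_k)/min_{k∈{1,…,K}} f_k , 2 } · Cost(m*). -/

import Mathlib

open Finset

/-- Total fulfillment cost of a plan `m` over `T` periods, `K` FDCs (indices `1,…,K`)
and the RDC (index `0`), with `n` items, fixed costs `f` and variable costs `c`. -/
noncomputable def fulfillCost (n T K : ℕ) (f : ℕ → ℝ) (c : ℕ → ℕ → ℕ → ℝ)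
    (m : ℕ → ℕ → ℕ → ℝ) : ℝ :=
  ∑ t ∈ Finset.Icc 1 T, ∑ k ∈ Finset.Icc 0 K,
    (f k * (if 0 < ∑ i ∈ Finset.Icc 1 n, m k t i then (1 : ℝ) else 0)
      + ∑ i ∈ Finset.Icc 1 n, c k t i * m k t i)

/-- Feasibility of a plan: nonnegativity, demand fulfillment, and FDC inventory
constraints. -/
def feasiblePlan (n T K : ℕ) (S : ℕ → ℕ → ℝ) (I0 : ℕ → ℕ → ℝ)
    (m : ℕ → ℕ → ℕ → ℝ) : Prop :=
  (∀ k ∈ Finset.Icc 0 K, ∀ t ∈ Finset.Icc 1 T, ∀ i ∈ Finset.Icc 1 n, 0 ≤ m k t i) ∧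
  (∀ t ∈ Finset.Icc 1 T, ∀ i ∈ Finset.Icc 1 n, ∑ k ∈ Finset.Icc 0 K, m k t i = S t i) ∧
  (∀ k ∈ Finset.Icc 1 K, ∀ i ∈ Finset.Icc 1 n, ∑ t ∈ Finset.Icc 1 T, m k t i ≤ I0 k i)


lemma abel_compare : ∀ (N : ℕ) (w a b : ℕ → ℝ),
    (∀ l, 1 ≤ l → l < N → w (l+1) ≤ w l) → (1 ≤ N → 0 ≤ w N) →
    (∀ l, 1 ≤ l → l ≤ N → ∑ l' ∈ Icc 1 l, b l' ≤ ∑ l' ∈ Icc 1 l, a l') →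
    ∑ l ∈ Icc 1 N, w l * b l ≤ ∑ l ∈ Icc 1 N, w l * a l := by
  intro N
  induction N with
  | zero => intro w a b _ _ _; simp
  | succ N ih =>
    intro w a b hw hwN hpre
    have hsplit : ∀ y : ℕ → ℝ, ∑ l ∈ Icc 1 (N+1), w l * y l
        = ∑ l ∈ Icc 1 N, (w l - w (N+1)) * y l + w (N+1) * ∑ l ∈ Icc 1 (N+1), y l := by
      intro y
      rw [Finset.sum_Icc_succ_top (by omega : 1 ≤ N + 1),
        Finset.sum_Icc_succ_top (by omega : 1 ≤ N + 1)]
      simp only [sub_mul, Finset.sum_sub_distrib, ← Finset.mul_sum]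
      ring
    rw [hsplit a, hsplit b]
    have h1 : ∑ l ∈ Icc 1 N, (w l - w (N+1)) * b l ≤ ∑ l ∈ Icc 1 N, (w l - w (N+1)) * a l := by
      refine ih (fun l => w l - w (N+1)) a b (fun l h1 h2 => ?_) (fun h1 => ?_)
        (fun l h1 h2 => hpre l h1 (by omega))
      · have := hw l h1 (by omega); linarith
      · have := hw N h1 (by omega); linarith
    have h2 : w (N+1) * ∑ l ∈ Icc 1 (N+1), b l ≤ w (N+1) * ∑ l ∈ Icc 1 (N+1), a l :=
      mul_le_mul_of_nonneg_left (hpre (N+1) (by omega) le_rfl) (hwN (by omega))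
    linarith

lemma downclosed_filter (K : ℕ) (P : ℕ → Prop) [DecidablePred P]
    (hdc : ∀ l l', 1 ≤ l → l ≤ l' → l' ≤ K → P l' → P l) :
    ∀ l, 1 ≤ l → l ≤ K → (P l ↔ l ≤ ((Icc 1 K).filter P).card) := by
  intro l hl1 hlK
  constructor
  · intro hPl
    have hsub : Icc 1 l ⊆ (Icc 1 K).filter P := by
      intro x hx
      simp only [Finset.mem_Icc] at hx
      simp only [Finset.mem_filter, Finset.mem_Icc]
      exact ⟨⟨hx.1, by omega⟩, hdc x l hx.1 hx.2 hlK hPl⟩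
    have := Finset.card_le_card hsub
    simpa [Nat.card_Icc] using this
  · intro hcard
    by_contra hPl
    have hsub : (Icc 1 K).filter P ⊆ Icc 1 (l-1) := by
      intro x hx
      simp only [Finset.mem_filter, Finset.mem_Icc] at hx
      simp only [Finset.mem_Icc]
      refine ⟨hx.1.1, ?_⟩
      by_contra hxl
      exact hPl (hdc l x hl1 (by omega) hx.1.2 hx.2)
    have := Finset.card_le_card hsub
    rw [Nat.card_Icc] at this
    omega

lemma reindex_sum (K : ℕ) (τ : ℕ → ℕ) (hmem : ∀ l ∈ Icc 1 K, τ l ∈ Icc 1 K)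
    (hinj : ∀ l ∈ Icc 1 K, ∀ l' ∈ Icc 1 K, τ l = τ l' → l = l') (g : ℕ → ℝ) :
    ∑ l ∈ Icc 1 K, g (τ l) = ∑ k ∈ Icc 1 K, g k := by
  have himg : (Icc 1 K).image τ = Icc 1 K := by
    apply Finset.eq_of_subset_of_card_le
    · intro x hx; rcases Finset.mem_image.mp hx with ⟨l, hl, rfl⟩; exact hmem l hl
    · rw [Finset.card_image_of_injOn hinj]
  conv_rhs => rw [← himg]
  rw [Finset.sum_image hinj]

lemma surj_of_injOn (K : ℕ) (τ : ℕ → ℕ) (hmem : ∀ l ∈ Icc 1 K, τ l ∈ Icc 1 K)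
    (hinj : ∀ l ∈ Icc 1 K, ∀ l' ∈ Icc 1 K, τ l = τ l' → l = l') :
    ∀ k ∈ Icc 1 K, ∃ l ∈ Icc 1 K, τ l = k := by
  have himg : (Icc 1 K).image τ = Icc 1 K := by
    apply Finset.eq_of_subset_of_card_le
    · intro x hx; rcases Finset.mem_image.mp hx with ⟨l, hl, rfl⟩; exact hmem l hl
    · rw [Finset.card_image_of_injOn hinj]
  intro k hk
  rw [← himg] at hk
  rcases Finset.mem_image.mp hk with ⟨l, hl, h⟩
  exact ⟨l, hl, h⟩

lemma greedy_cum (T : ℕ) (A : ℝ) (S G C : ℕ → ℝ)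
    (hG0 : G 0 = 0) (hC0 : C 0 = 0) (hS : ∀ t, 1 ≤ t → t ≤ T → 0 ≤ S t)
    (hG : ∀ t, t < T → G (t+1) = G t + min (S (t+1)) (A - C t))
    (hC : ∀ t, t < T → C (t+1) = C t ∨ C (t+1) = C t + min (S (t+1)) (A - C t))
    (hCle : ∀ t, t ≤ T → C t ≤ A) :
    ∀ t, t ≤ T → C t ≤ G t ∧ min (∑ τ ∈ Icc 1 t, S τ) A ≤ G t := by
  intro t
  induction t with
  | zero =>
    intro _
    refine ⟨by rw [hG0, hC0], ?_⟩
    rw [hG0]; simpa using min_le_left (0:ℝ) A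
  | succ t ih =>
    intro ht
    have ih' := ih (by omega)
    have hmin0 : 0 ≤ min (S (t+1)) (A - C t) := by
      have := hCle t (by omega)
      exact le_min (hS (t+1) (by omega) ht) (by linarith)
    have hGt := hG t (by omega)
    constructor
    · rcases hC t (by omega) with h | h <;> rw [h, hGt] <;> linarith [ih'.1]
    · rw [Finset.sum_Icc_succ_top (by omega : 1 ≤ t + 1), hGt]
      rcases le_total (S (t+1)) (A - C t) with h | h
      · rw [min_eq_left h]
        rcases le_total (∑ τ ∈ Icc 1 t, S τ) A with h2 | h2
        · have := ih'.2; rw [min_eq_left h2] at this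
          calc min (∑ τ ∈ Icc 1 t, S τ + S (t+1)) A
              ≤ ∑ τ ∈ Icc 1 t, S τ + S (t+1) := min_le_left _ _
            _ ≤ G t + S (t+1) := by linarith
        · have := ih'.2; rw [min_eq_right h2] at this
          have h3 : min (∑ τ ∈ Icc 1 t, S τ + S (t+1)) A ≤ A := min_le_right _ _
          have := hS (t+1) (by omega) ht; linarith
      · rw [min_eq_right h]
        have h3 : min (∑ τ ∈ Icc 1 t, S τ + S (t+1)) A ≤ A := min_le_right _ _
        have := ih'.1
        linarith

lemma sum_Icc_split (N M : ℕ) (hNM : N ≤ M) (g : ℕ → ℝ) :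
    ∑ x ∈ Icc 1 M, g x = ∑ x ∈ Icc 1 N, g x + ∑ x ∈ Icc (N+1) M, g x := by
  have hdisj : Disjoint (Icc 1 N) (Icc (N+1) M) := by
    rw [Finset.disjoint_left]
    intro a ha hb
    simp only [Finset.mem_Icc] at ha hb
    omega
  rw [← Finset.sum_union hdisj]
  apply Finset.sum_congr _ (fun _ _ => rfl)
  ext x; simp only [Finset.mem_Icc, Finset.mem_union]; omega

theorem costComparisonVPriority_competitive
    (n T K : ℕ) (hn : 1 ≤ n) (hT : 1 ≤ T) (hK : 1 ≤ K)
    (f : ℕ → ℝ) (hf0 : 0 ≤ f 0) (hf : ∀ k ∈ Icc 1 K, 0 < f k)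
    (c : ℕ → ℕ → ℝ) (hc : ∀ k ∈ Icc 0 K, ∀ i ∈ Icc 1 n, 0 ≤ c k i)
    (S : ℕ → ℕ → ℝ) (hS : ∀ t ∈ Icc 1 T, ∀ i ∈ Icc 1 n, 0 ≤ S t i)
    (I0 : ℕ → ℕ → ℝ) (hI0 : ∀ k ∈ Icc 1 K, ∀ i ∈ Icc 1 n, 0 ≤ I0 k i)
    (σ : ℕ → ℕ → ℕ)
    (hσ_mem : ∀ i ∈ Icc 1 n, ∀ l ∈ Icc 1 K, σ i l ∈ Icc 1 K)
    (hσ_inj : ∀ i ∈ Icc 1 n, ∀ l ∈ Icc 1 K, ∀ l' ∈ Icc 1 K, σ i l = σ i l' → l = l')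
    (hσ_sorted : ∀ i ∈ Icc 1 n, ∀ l, 1 ≤ l → l < K →
      c (σ i l) i ≤ c (σ i (l + 1)) i ∧
        (c (σ i l) i = c (σ i (l + 1)) i → σ i l < σ i (l + 1)))
    (k0 : ℕ → ℕ)
    (hk0 : ∀ i ∈ Icc 1 n, k0 i = ((Icc 1 K).filter (fun k => c k i < c 0 i)).card)
    (m : ℕ → ℕ → ℕ → ℝ)
    (I : ℕ → ℕ → ℕ → ℝ)
    (hI : ∀ k ∈ Icc 1 K, ∀ t : ℕ, ∀ i ∈ Icc 1 n,
      I k t i = I0 k i - ∑ τ ∈ Icc 1 t, m k τ i)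
    (mhat : ℕ → ℕ → ℕ → ℝ)
    (hmhat : ∀ i ∈ Icc 1 n, ∀ t ∈ Icc 1 T, ∀ l ∈ Icc 1 (k0 i),
      mhat (σ i l) t i =
        min (max (S t i - ∑ l' ∈ Icc 1 (l - 1), I (σ i l') (t - 1) i) 0)
          (I (σ i l) (t - 1) i))
    (hmhat' : ∀ i ∈ Icc 1 n, ∀ t ∈ Icc 1 T, ∀ l ∈ Icc (k0 i + 1) K,
      mhat (σ i l) t i = 0)
    (hmhat0 : ∀ t ∈ Icc 1 T, ∀ i ∈ Icc 1 n,
      mhat 0 t i = S t i - ∑ k ∈ Icc 1 K, mhat k t i)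
    (hpolicy : ∀ t ∈ Icc 1 T,
      ((f 0 + ∑ i ∈ Icc 1 n, c 0 i * S t i <
          ∑ k ∈ Icc 0 K, (f k * (if 0 < ∑ i ∈ Icc 1 n, mhat k t i then (1:ℝ) else 0)
            + ∑ i ∈ Icc 1 n, c k i * mhat k t i)) →
        (∀ i ∈ Icc 1 n, m 0 t i = S t i) ∧
        (∀ k ∈ Icc 1 K, ∀ i ∈ Icc 1 n, m k t i = 0)) ∧
      ((∑ k ∈ Icc 0 K, (f k * (if 0 < ∑ i ∈ Icc 1 n, mhat k t i then (1:ℝ) else 0)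
            + ∑ i ∈ Icc 1 n, c k i * mhat k t i) ≤
          f 0 + ∑ i ∈ Icc 1 n, c 0 i * S t i) →
        ∀ k ∈ Icc 0 K, ∀ i ∈ Icc 1 n, m k t i = mhat k t i))
    (mstar : ℕ → ℕ → ℕ → ℝ) (hmstar : feasiblePlan n T K S I0 mstar) :
    fulfillCost n T K f (fun k _ i => c k i) m ≤
      max ((f 0 + ∑ k ∈ Icc 1 K, f k) /
          ((Icc 1 K).inf' (Finset.nonempty_Icc.mpr hK) f)) 2
        * fulfillCost n T K f (fun k _ i => c k i) mstar := by
  obtain ⟨hms_nonneg, hms_dem, hms_inv⟩ := hmstar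
  haveI hdecQ : DecidablePred (fun t => ∀ k ∈ Icc 1 K, ∀ i ∈ Icc 1 n, mstar k t i = 0) :=
    fun t => Classical.propDecidable _
  simp only [fulfillCost]
  set fmin := (Icc 1 K).inf' (Finset.nonempty_Icc.mpr hK) f with hfmindef
  set R := max ((f 0 + ∑ k ∈ Icc 1 K, f k) / fmin) 2 with hRdef
  have hKicc : (0:ℕ) ∉ Icc 1 K := by simp
  have hIcc0K : Icc 0 K = insert 0 (Icc 1 K) := by
    ext x; simp only [Finset.mem_Icc, Finset.mem_insert]; omega
  have h0K : ∀ k ∈ Icc 1 K, k ∈ Icc 0 K := by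
    intro k hk; simp only [Finset.mem_Icc] at hk ⊢; omega
  have h00K : (0:ℕ) ∈ Icc 0 K := by simp
  have hfk0 : ∀ k ∈ Icc 0 K, 0 ≤ f k := by
    intro k hk
    rcases Nat.eq_zero_or_pos k with rfl | hpos
    · exact hf0
    · exact (hf k (Finset.mem_Icc.mpr ⟨hpos, (Finset.mem_Icc.mp hk).2⟩)).le
  have hfminpos : 0 < fmin := by rw [hfmindef, Finset.lt_inf'_iff]; exact hf
  have hR2 : (2:ℝ) ≤ R := le_max_right _ _
  have hR0 : (0:ℝ) ≤ R := by linarith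
  have hRf : f 0 + ∑ k ∈ Icc 1 K, f k ≤ R * fmin := by
    have h1 : (f 0 + ∑ k ∈ Icc 1 K, f k) / fmin ≤ R := le_max_left _ _
    calc f 0 + ∑ k ∈ Icc 1 K, f k = ((f 0 + ∑ k ∈ Icc 1 K, f k) / fmin) * fmin := by
          field_simp
      _ ≤ R * fmin := mul_le_mul_of_nonneg_right h1 hfminpos.le
  have mcase : ∀ t ∈ Icc 1 T,
      ((∑ k ∈ Icc 0 K, (f k * (if 0 < ∑ i ∈ Icc 1 n, mhat k t i then (1:ℝ) else 0) + ∑ i ∈ Icc 1 n, c k i * mhat k t i) ≤ f 0 + ∑ i ∈ Icc 1 n, c 0 i * S t i) ∧ ∀ k ∈ Icc 0 K, ∀ i ∈ Icc 1 n, m k t i = mhat k t i) ∨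
      ((f 0 + ∑ i ∈ Icc 1 n, c 0 i * S t i < ∑ k ∈ Icc 0 K, (f k * (if 0 < ∑ i ∈ Icc 1 n, mhat k t i then (1:ℝ) else 0) + ∑ i ∈ Icc 1 n, c k i * mhat k t i)) ∧ (∀ i ∈ Icc 1 n, m 0 t i = S t i) ∧
        (∀ k ∈ Icc 1 K, ∀ i ∈ Icc 1 n, m k t i = 0)) := by
    intro t ht
    rcases le_or_gt (∑ k ∈ Icc 0 K, (f k * (if 0 < ∑ i ∈ Icc 1 n, mhat k t i then (1:ℝ) else 0) + ∑ i ∈ Icc 1 n, c k i * mhat k t i)) (f 0 + ∑ i ∈ Icc 1 n, c 0 i * S t i) with h | h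
    · exact Or.inl ⟨h, (hpolicy t ht).2 h⟩
    · exact Or.inr ⟨h, (hpolicy t ht).1 h⟩
  have hsurj : ∀ i ∈ Icc 1 n, ∀ k ∈ Icc 1 K, ∃ l ∈ Icc 1 K, σ i l = k :=
    fun i hi => surj_of_injOn K (σ i) (hσ_mem i hi) (hσ_inj i hi)
  have hk0K : ∀ i ∈ Icc 1 n, k0 i ≤ K := by
    intro i hi
    rw [hk0 i hi]
    have h := Finset.card_filter_le (Icc 1 K) (fun k => c k i < c 0 i)
    rw [Nat.card_Icc] at h; omega
  have minv : ∀ t, t ≤ T → ∀ k ∈ Icc 1 K, ∀ i ∈ Icc 1 n, 0 ≤ I k t i := by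
    intro t
    induction t with
    | zero =>
      intro _ k hk i hi
      rw [hI k hk 0 i hi, Finset.Icc_eq_empty (by omega), Finset.sum_empty, sub_zero]
      exact hI0 k hk i hi
    | succ t ih =>
      intro ht k hk i hi
      have hstep : I k (t+1) i = I k t i - m k (t+1) i := by
        rw [hI k hk (t+1) i hi, hI k hk t i hi,
          Finset.sum_Icc_succ_top (by omega : 1 ≤ t+1)]
        ring
      have hprev := ih (by omega) k hk i hi
      have ht1T : (t+1) ∈ Icc 1 T := Finset.mem_Icc.mpr ⟨by omega, ht⟩
      rcases mcase (t+1) ht1T with ⟨_, hc⟩ | ⟨_, _, hc⟩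
      · rw [hstep, hc k (h0K k hk) i hi]
        obtain ⟨l, hl, rfl⟩ := hsurj i hi k hk
        by_cases hlk : l ≤ k0 i
        · rw [hmhat i hi (t+1) ht1T l (Finset.mem_Icc.mpr ⟨(Finset.mem_Icc.mp hl).1, hlk⟩)]
          simp only [Nat.add_sub_cancel]
          have h2 := min_le_right
            (max (S (t+1) i - ∑ l' ∈ Icc 1 (l-1), I (σ i l') t i) 0) (I (σ i l) t i)
          linarith
        · have hlm := Finset.mem_Icc.mp hl
          rw [hmhat' i hi (t+1) ht1T l (Finset.mem_Icc.mpr ⟨by omega, hlm.2⟩)]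
          linarith
      · rw [hstep, hc k hk i hi]; linarith
  have mhatp : ∀ i ∈ Icc 1 n, ∀ τ, τ < T → ∀ l, l ≤ k0 i →
      ∑ l' ∈ Icc 1 l, mhat (σ i l') (τ+1) i
        = min (S (τ+1) i) (∑ l' ∈ Icc 1 l, I (σ i l') τ i) := by
    intro i hi τ hτ
    have hτT : (τ+1) ∈ Icc 1 T := Finset.mem_Icc.mpr ⟨by omega, by omega⟩
    intro l
    induction l with
    | zero =>
      intro _
      rw [Finset.Icc_eq_empty (by omega), Finset.sum_empty, Finset.sum_empty]
      exact (min_eq_right (hS (τ+1) hτT i hi)).symm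
    | succ l ih =>
      intro hlk
      have hml := ih (by omega)
      have hstep := hmhat i hi (τ+1) hτT (l+1) (Finset.mem_Icc.mpr ⟨by omega, hlk⟩)
      simp only [Nat.add_sub_cancel] at hstep
      rw [Finset.sum_Icc_succ_top (by omega : 1 ≤ l+1),
        Finset.sum_Icc_succ_top (by omega : 1 ≤ l+1), hml, hstep]
      have hSp : 0 ≤ S (τ+1) i := hS _ hτT i hi
      have hBp : 0 ≤ ∑ l' ∈ Icc 1 l, I (σ i l') τ i := by
        apply Finset.sum_nonneg
        intro l' hl'
        have hl'm := Finset.mem_Icc.mp hl'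
        have hk0' := hk0K i hi
        exact minv τ (by omega) (σ i l')
          (hσ_mem i hi l' (Finset.mem_Icc.mpr ⟨hl'm.1, by omega⟩)) i hi
      have hIp : 0 ≤ I (σ i (l+1)) τ i := by
        have hk0' := hk0K i hi
        exact minv τ (by omega) (σ i (l+1))
          (hσ_mem i hi (l+1) (Finset.mem_Icc.mpr ⟨by omega, by omega⟩)) i hi
      rcases le_total (S (τ+1) i) (∑ l' ∈ Icc 1 l, I (σ i l') τ i) with h | h
      · rw [max_eq_right (by linarith), min_eq_left h, min_eq_left hIp,
          min_eq_left (by linarith), add_zero]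
      · rw [max_eq_left (by linarith), min_eq_right h]
        rcases le_total (S (τ+1) i - ∑ l' ∈ Icc 1 l, I (σ i l') τ i) (I (σ i (l+1)) τ i)
          with h2 | h2
        · rw [min_eq_left h2, min_eq_left (by linarith)]; ring
        · rw [min_eq_right h2, min_eq_right (by linarith)]
  have mhat_sumK : ∀ i ∈ Icc 1 n, ∀ τ, τ < T →
      ∑ k ∈ Icc 1 K, mhat k (τ+1) i
        = min (S (τ+1) i) (∑ l ∈ Icc 1 (k0 i), I (σ i l) τ i) := by
    intro i hi τ hτ
    have hτT : (τ+1) ∈ Icc 1 T := Finset.mem_Icc.mpr ⟨by omega, by omega⟩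
    have h1 : ∑ k ∈ Icc 1 K, mhat k (τ+1) i = ∑ l ∈ Icc 1 K, mhat (σ i l) (τ+1) i :=
      (reindex_sum K (σ i) (hσ_mem i hi) (hσ_inj i hi) (fun k => mhat k (τ+1) i)).symm
    rw [h1, sum_Icc_split (k0 i) K (hk0K i hi) _,
      Finset.sum_eq_zero (fun l hl => hmhat' i hi (τ+1) hτT l hl), add_zero]
    exact mhatp i hi τ hτ (k0 i) le_rfl
  have hBnn : ∀ i ∈ Icc 1 n, ∀ τ, τ ≤ T → ∀ l, l ≤ k0 i →
      0 ≤ ∑ l' ∈ Icc 1 l, I (σ i l') τ i := by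
    intro i hi τ hτ l hl
    apply Finset.sum_nonneg
    intro l' hl'
    have hl'm := Finset.mem_Icc.mp hl'
    have hk0' := hk0K i hi
    exact minv τ hτ (σ i l') (hσ_mem i hi l' (Finset.mem_Icc.mpr ⟨hl'm.1, by omega⟩)) i hi
  have mhat_nonneg : ∀ i ∈ Icc 1 n, ∀ t ∈ Icc 1 T, ∀ k ∈ Icc 0 K, 0 ≤ mhat k t i := by
    intro i hi t ht k hk
    have htm := Finset.mem_Icc.mp ht
    obtain ⟨τ, rfl⟩ : ∃ τ, t = τ + 1 := ⟨t - 1, by omega⟩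
    have hτ : τ < T := by omega
    rcases Nat.eq_zero_or_pos k with rfl | hkpos
    · rw [hmhat0 (τ+1) ht i hi, mhat_sumK i hi τ hτ]
      have h2 := min_le_left (S (τ+1) i) (∑ l ∈ Icc 1 (k0 i), I (σ i l) τ i)
      linarith
    · have hkK : k ∈ Icc 1 K := Finset.mem_Icc.mpr ⟨hkpos, (Finset.mem_Icc.mp hk).2⟩
      obtain ⟨l, hl, rfl⟩ := hsurj i hi k hkK
      have hlm := Finset.mem_Icc.mp hl
      by_cases hlk : l ≤ k0 i
      · rw [hmhat i hi (τ+1) ht l (Finset.mem_Icc.mpr ⟨hlm.1, hlk⟩)]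
        simp only [Nat.add_sub_cancel]
        exact le_min (le_max_right _ _) (minv τ (by omega) (σ i l) (hσ_mem i hi l hl) i hi)
      · rw [hmhat' i hi (τ+1) ht l (Finset.mem_Icc.mpr ⟨by omega, hlm.2⟩)]
  have Szero : ∀ t ∈ Icc 1 T, (∀ i ∈ Icc 1 n, S t i = 0) →
      ∀ k ∈ Icc 0 K, ∀ i ∈ Icc 1 n, mhat k t i = 0 := by
    intro t ht hz k hk i hi
    have htm := Finset.mem_Icc.mp ht
    obtain ⟨τ, rfl⟩ : ∃ τ, t = τ + 1 := ⟨t - 1, by omega⟩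
    have hτ : τ < T := by omega
    rcases Nat.eq_zero_or_pos k with rfl | hkpos
    · rw [hmhat0 (τ+1) ht i hi, mhat_sumK i hi τ hτ, hz i hi,
        min_eq_left (hBnn i hi τ (by omega) (k0 i) le_rfl), sub_zero]
    · have hkK : k ∈ Icc 1 K := Finset.mem_Icc.mpr ⟨hkpos, (Finset.mem_Icc.mp hk).2⟩
      obtain ⟨l, hl, rfl⟩ := hsurj i hi k hkK
      have hlm := Finset.mem_Icc.mp hl
      by_cases hlk : l ≤ k0 i
      · rw [hmhat i hi (τ+1) ht l (Finset.mem_Icc.mpr ⟨hlm.1, hlk⟩)]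
        simp only [Nat.add_sub_cancel]
        rw [hz i hi]
        have hB := hBnn i hi τ (by omega) (l-1) (by omega)
        have hI1 : 0 ≤ I (σ i l) τ i := minv τ (by omega) (σ i l) (hσ_mem i hi l hl) i hi
        rw [max_eq_right (by linarith), min_eq_left hI1]
      · rw [hmhat' i hi (τ+1) ht l (Finset.mem_Icc.mpr ⟨by omega, hlm.2⟩)]
  have hPHD : ∀ t ∈ Icc 1 T, (∑ k ∈ Icc 0 K, (f k * (if 0 < ∑ i ∈ Icc 1 n, m k t i then (1:ℝ) else 0) + ∑ i ∈ Icc 1 n, c k i * m k t i) ≤ ∑ k ∈ Icc 0 K, (f k * (if 0 < ∑ i ∈ Icc 1 n, mhat k t i then (1:ℝ) else 0) + ∑ i ∈ Icc 1 n, c k i * mhat k t i)) ∧ (∑ k ∈ Icc 0 K, (f k * (if 0 < ∑ i ∈ Icc 1 n, m k t i then (1:ℝ) else 0) + ∑ i ∈ Icc 1 n, c k i * m k t i) ≤ f 0 + ∑ i ∈ Icc 1 n, c 0 i * S t i) := by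
    intro t ht
    rcases mcase t ht with ⟨hle, heq⟩ | ⟨hlt, h0, hz⟩
    · have hPH : (∑ k ∈ Icc 0 K, (f k * (if 0 < ∑ i ∈ Icc 1 n, m k t i then (1:ℝ) else 0) + ∑ i ∈ Icc 1 n, c k i * m k t i)) = (∑ k ∈ Icc 0 K, (f k * (if 0 < ∑ i ∈ Icc 1 n, mhat k t i then (1:ℝ) else 0) + ∑ i ∈ Icc 1 n, c k i * mhat k t i)) := by
        apply Finset.sum_congr rfl
        intro k hk
        have h1 : ∑ i ∈ Icc 1 n, m k t i = ∑ i ∈ Icc 1 n, mhat k t i :=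
          Finset.sum_congr rfl fun i hi => heq k hk i hi
        have h2 : ∑ i ∈ Icc 1 n, c k i * m k t i = ∑ i ∈ Icc 1 n, c k i * mhat k t i :=
          Finset.sum_congr rfl fun i hi => by rw [heq k hk i hi]
        rw [h1, h2]
      exact ⟨le_of_eq hPH, hPH ▸ hle⟩
    · have hPeq : (∑ k ∈ Icc 0 K, (f k * (if 0 < ∑ i ∈ Icc 1 n, m k t i then (1:ℝ) else 0) + ∑ i ∈ Icc 1 n, c k i * m k t i)) = f 0 * (if 0 < ∑ i ∈ Icc 1 n, S t i then (1:ℝ) else 0)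
          + ∑ i ∈ Icc 1 n, c 0 i * S t i := by
        rw [hIcc0K, Finset.sum_insert hKicc]
        have hz2 : ∑ k ∈ Icc 1 K, (f k * (if 0 < ∑ i ∈ Icc 1 n, m k t i then (1:ℝ) else 0)
            + ∑ i ∈ Icc 1 n, c k i * m k t i) = 0 := by
          apply Finset.sum_eq_zero
          intro k hk
          have h1 : ∑ i ∈ Icc 1 n, m k t i = 0 :=
            Finset.sum_eq_zero fun i hi => hz k hk i hi
          have h2 : ∑ i ∈ Icc 1 n, c k i * m k t i = 0 :=
            Finset.sum_eq_zero fun i hi => by rw [hz k hk i hi, mul_zero]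
          rw [h1, h2]
          simp
        have h3 : ∑ i ∈ Icc 1 n, m 0 t i = ∑ i ∈ Icc 1 n, S t i :=
          Finset.sum_congr rfl fun i hi => h0 i hi
        have h4 : ∑ i ∈ Icc 1 n, c 0 i * m 0 t i = ∑ i ∈ Icc 1 n, c 0 i * S t i :=
          Finset.sum_congr rfl fun i hi => by rw [h0 i hi]
        rw [hz2, h3, h4, add_zero]
      have hind : f 0 * (if 0 < ∑ i ∈ Icc 1 n, S t i then (1:ℝ) else 0) ≤ f 0 := by
        split_ifs
        · rw [mul_one]
        · rw [mul_zero]; exact hf0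
      have hPD : (∑ k ∈ Icc 0 K, (f k * (if 0 < ∑ i ∈ Icc 1 n, m k t i then (1:ℝ) else 0) + ∑ i ∈ Icc 1 n, c k i * m k t i)) ≤ f 0 + ∑ i ∈ Icc 1 n, c 0 i * S t i := by rw [hPeq]; linarith
      exact ⟨by linarith, hPD⟩
  have hHF : ∀ t ∈ Icc 1 T, (∑ k ∈ Icc 0 K, (f k * (if 0 < ∑ i ∈ Icc 1 n, mhat k t i then (1:ℝ) else 0) + ∑ i ∈ Icc 1 n, c k i * mhat k t i)) ≤ (f 0 + ∑ k ∈ Icc 1 K, f k) + (∑ k ∈ Icc 0 K, ∑ i ∈ Icc 1 n, c k i * mhat k t i) := by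
    intro t ht
    rw [Finset.sum_add_distrib]
    apply add_le_add _ le_rfl
    calc ∑ k ∈ Icc 0 K, f k * (if 0 < ∑ i ∈ Icc 1 n, mhat k t i then (1:ℝ) else 0)
        ≤ ∑ k ∈ Icc 0 K, f k := by
          apply Finset.sum_le_sum
          intro k hk
          split_ifs
          · rw [mul_one]
          · rw [mul_zero]; exact hfk0 k hk
      _ = f 0 + ∑ k ∈ Icc 1 K, f k := by rw [hIcc0K, Finset.sum_insert hKicc]
  have hOsplit : ∀ t, (∑ k ∈ Icc 0 K, (f k * (if 0 < ∑ i ∈ Icc 1 n, mstar k t i then (1:ℝ) else 0) + ∑ i ∈ Icc 1 n, c k i * mstar k t i)) = (∑ k ∈ Icc 0 K, f k * (if 0 < ∑ i ∈ Icc 1 n, mstar k t i then (1:ℝ) else 0)) + (∑ k ∈ Icc 0 K, ∑ i ∈ Icc 1 n, c k i * mstar k t i) := fun t => Finset.sum_add_distrib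
  have hFS_nonneg : ∀ t ∈ Icc 1 T, 0 ≤ (∑ k ∈ Icc 0 K, f k * (if 0 < ∑ i ∈ Icc 1 n, mstar k t i then (1:ℝ) else 0)) := by
    intro t ht
    apply Finset.sum_nonneg
    intro k hk
    split_ifs
    · rw [mul_one]; exact hfk0 k hk
    · rw [mul_zero]
  have hVS_nonneg : ∀ t ∈ Icc 1 T, 0 ≤ (∑ k ∈ Icc 0 K, ∑ i ∈ Icc 1 n, c k i * mstar k t i) := by
    intro t ht
    apply Finset.sum_nonneg
    intro k hk
    apply Finset.sum_nonneg
    intro i hi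
    exact mul_nonneg (hc k hk i hi) (hms_nonneg k hk t ht i hi)
  have hVH_nonneg : ∀ t ∈ Icc 1 T, 0 ≤ (∑ k ∈ Icc 0 K, ∑ i ∈ Icc 1 n, c k i * mhat k t i) := by
    intro t ht
    apply Finset.sum_nonneg
    intro k hk
    apply Finset.sum_nonneg
    intro i hi
    exact mul_nonneg (hc k hk i hi) (mhat_nonneg i hi t ht k hk)
  have hO_nonneg : ∀ t ∈ Icc 1 T, 0 ≤ (∑ k ∈ Icc 0 K, (f k * (if 0 < ∑ i ∈ Icc 1 n, mstar k t i then (1:ℝ) else 0) + ∑ i ∈ Icc 1 n, c k i * mstar k t i)) := by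
    intro t ht
    rw [hOsplit t]
    have := hFS_nonneg t ht
    have := hVS_nonneg t ht
    linarith
  have caseA : ∀ t ∈ Icc 1 T, (∀ k ∈ Icc 1 K, ∀ i ∈ Icc 1 n, mstar k t i = 0) →
      (∑ k ∈ Icc 0 K, (f k * (if 0 < ∑ i ∈ Icc 1 n, m k t i then (1:ℝ) else 0) + ∑ i ∈ Icc 1 n, c k i * m k t i)) ≤ (∑ k ∈ Icc 0 K, (f k * (if 0 < ∑ i ∈ Icc 1 n, mstar k t i then (1:ℝ) else 0) + ∑ i ∈ Icc 1 n, c k i * mstar k t i)) := by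
    intro t ht hQ
    have hSnn : ∀ i ∈ Icc 1 n, 0 ≤ S t i := fun i hi => hS t ht i hi
    have hm0 : ∀ i ∈ Icc 1 n, mstar 0 t i = S t i := by
      intro i hi
      have hd := hms_dem t ht i hi
      rw [hIcc0K, Finset.sum_insert hKicc,
        Finset.sum_eq_zero (fun k hk => hQ k hk i hi), add_zero] at hd
      exact hd
    rcases eq_or_lt_of_le (Finset.sum_nonneg hSnn) with hzero | hpos
    · have hSz : ∀ i ∈ Icc 1 n, S t i = 0 :=
        (Finset.sum_eq_zero_iff_of_nonneg hSnn).mp hzero.symm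
      have hmz := Szero t ht hSz
      have hHz : (∑ k ∈ Icc 0 K, (f k * (if 0 < ∑ i ∈ Icc 1 n, mhat k t i then (1:ℝ) else 0) + ∑ i ∈ Icc 1 n, c k i * mhat k t i)) = 0 := by
        apply Finset.sum_eq_zero
        intro k hk
        have h1 : ∑ i ∈ Icc 1 n, mhat k t i = 0 :=
          Finset.sum_eq_zero fun i hi => hmz k hk i hi
        have h2 : ∑ i ∈ Icc 1 n, c k i * mhat k t i = 0 :=
          Finset.sum_eq_zero fun i hi => by rw [hmz k hk i hi, mul_zero]
        rw [h1, h2]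
        simp
      have hDz : (0:ℝ) ≤ f 0 + ∑ i ∈ Icc 1 n, c 0 i * S t i := by
        have h5 : ∑ i ∈ Icc 1 n, c 0 i * S t i = 0 :=
          Finset.sum_eq_zero fun i hi => by rw [hSz i hi, mul_zero]
        rw [h5]; linarith
      have hmeq := (hpolicy t ht).2 (by rw [hHz]; exact hDz)
      have hPz : (∑ k ∈ Icc 0 K, (f k * (if 0 < ∑ i ∈ Icc 1 n, m k t i then (1:ℝ) else 0) + ∑ i ∈ Icc 1 n, c k i * m k t i)) = 0 := by
        apply Finset.sum_eq_zero
        intro k hk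
        have h1 : ∑ i ∈ Icc 1 n, m k t i = 0 :=
          Finset.sum_eq_zero fun i hi => by rw [hmeq k hk i hi, hmz k hk i hi]
        have h2 : ∑ i ∈ Icc 1 n, c k i * m k t i = 0 :=
          Finset.sum_eq_zero fun i hi => by rw [hmeq k hk i hi, hmz k hk i hi, mul_zero]
        rw [h1, h2]
        simp
      rw [hPz]
      exact hO_nonneg t ht
    · have hOeq : (∑ k ∈ Icc 0 K, (f k * (if 0 < ∑ i ∈ Icc 1 n, mstar k t i then (1:ℝ) else 0) + ∑ i ∈ Icc 1 n, c k i * mstar k t i)) = f 0 + ∑ i ∈ Icc 1 n, c 0 i * S t i := by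
        rw [hIcc0K, Finset.sum_insert hKicc]
        have hz2 : ∑ k ∈ Icc 1 K, (f k * (if 0 < ∑ i ∈ Icc 1 n, mstar k t i then (1:ℝ) else 0)
            + ∑ i ∈ Icc 1 n, c k i * mstar k t i) = 0 := by
          apply Finset.sum_eq_zero
          intro k hk
          have h1 : ∑ i ∈ Icc 1 n, mstar k t i = 0 :=
            Finset.sum_eq_zero fun i hi => hQ k hk i hi
          have h2 : ∑ i ∈ Icc 1 n, c k i * mstar k t i = 0 :=
            Finset.sum_eq_zero fun i hi => by rw [hQ k hk i hi, mul_zero]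
          rw [h1, h2]
          simp
        have h3 : ∑ i ∈ Icc 1 n, mstar 0 t i = ∑ i ∈ Icc 1 n, S t i :=
          Finset.sum_congr rfl fun i hi => hm0 i hi
        have h4 : ∑ i ∈ Icc 1 n, c 0 i * mstar 0 t i = ∑ i ∈ Icc 1 n, c 0 i * S t i :=
          Finset.sum_congr rfl fun i hi => by rw [hm0 i hi]
        rw [hz2, h3, h4, add_zero, if_pos hpos, mul_one]
      rw [hOeq]
      exact (hPHD t ht).2
  have caseB : ∀ t ∈ Icc 1 T, (¬ ∀ k ∈ Icc 1 K, ∀ i ∈ Icc 1 n, mstar k t i = 0) →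
      fmin ≤ (∑ k ∈ Icc 0 K, f k * (if 0 < ∑ i ∈ Icc 1 n, mstar k t i then (1:ℝ) else 0)) := by
    intro t ht hq
    push_neg at hq
    obtain ⟨k, hk, i, hi, hne⟩ := hq
    have hkpos : 0 < mstar k t i :=
      lt_of_le_of_ne (hms_nonneg k (h0K k hk) t ht i hi) (Ne.symm hne)
    have hsum : 0 < ∑ i ∈ Icc 1 n, mstar k t i :=
      lt_of_lt_of_le hkpos
        (Finset.single_le_sum (fun j hj => hms_nonneg k (h0K k hk) t ht j hj) hi)
    have hterm : f k ≤ (∑ k ∈ Icc 0 K, f k * (if 0 < ∑ i ∈ Icc 1 n, mstar k t i then (1:ℝ) else 0)) := by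
      have h1 : f k * (if 0 < ∑ i ∈ Icc 1 n, mstar k t i then (1:ℝ) else 0) = f k := by
        rw [if_pos hsum, mul_one]
      calc f k = f k * (if 0 < ∑ i ∈ Icc 1 n, mstar k t i then (1:ℝ) else 0) := h1.symm
        _ ≤ (∑ k ∈ Icc 0 K, f k * (if 0 < ∑ i ∈ Icc 1 n, mstar k t i then (1:ℝ) else 0)) := by
            apply Finset.single_le_sum _ (h0K k hk)
            intro j hj
            split_ifs
            · rw [mul_one]; exact hfk0 j hj
            · rw [mul_zero]
    have hmin : fmin ≤ f k := Finset.inf'_le f hk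
    linarith
  have key : ∑ t ∈ Icc 1 T, (∑ k ∈ Icc 0 K, ∑ i ∈ Icc 1 n, c k i * mhat k t i) ≤ ∑ t ∈ Icc 1 T, (∑ k ∈ Icc 0 K, ∑ i ∈ Icc 1 n, c k i * mstar k t i) := by
    have hswap : ∀ (mm : ℕ → ℕ → ℕ → ℝ),
        ∑ t ∈ Icc 1 T, ∑ k ∈ Icc 0 K, ∑ i ∈ Icc 1 n, c k i * mm k t i
          = ∑ i ∈ Icc 1 n, ∑ t ∈ Icc 1 T, ∑ k ∈ Icc 0 K, c k i * mm k t i := by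
      intro mm
      calc ∑ t ∈ Icc 1 T, ∑ k ∈ Icc 0 K, ∑ i ∈ Icc 1 n, c k i * mm k t i
          = ∑ t ∈ Icc 1 T, ∑ i ∈ Icc 1 n, ∑ k ∈ Icc 0 K, c k i * mm k t i :=
            Finset.sum_congr rfl (fun t _ => Finset.sum_comm)
        _ = ∑ i ∈ Icc 1 n, ∑ t ∈ Icc 1 T, ∑ k ∈ Icc 0 K, c k i * mm k t i :=
            Finset.sum_comm
    rw [hswap mhat, hswap mstar]
    apply Finset.sum_le_sum
    intro i hi
    have hmono : ∀ l l', 1 ≤ l → l ≤ l' → l' ≤ K → c (σ i l) i ≤ c (σ i l') i := by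
      intro l l' h1 h2
      induction l', h2 using Nat.le_induction with
      | base => intro _; exact le_rfl
      | succ l'' h2' ih =>
        intro h3
        exact le_trans (ih (by omega)) (hσ_sorted i hi l'' (by omega) (by omega)).1
    have hdc : ∀ l l', 1 ≤ l → l ≤ l' → l' ≤ K →
        c (σ i l') i < c 0 i → c (σ i l) i < c 0 i :=
      fun l l' h1 h2 h3 h4 => lt_of_le_of_lt (hmono l l' h1 h2 h3) h4
    have hcard : ((Icc 1 K).filter (fun l => c (σ i l) i < c 0 i)).card = k0 i := by
      rw [hk0 i hi]
      apply Finset.card_bij (fun l _ => σ i l)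
      · intro l hl
        have hm := Finset.mem_filter.mp hl
        exact Finset.mem_filter.mpr ⟨hσ_mem i hi l hm.1, hm.2⟩
      · intro l1 h1 l2 h2 he
        exact hσ_inj i hi l1 (Finset.mem_filter.mp h1).1 l2 (Finset.mem_filter.mp h2).1 he
      · intro k hk
        obtain ⟨l, hl, rfl⟩ := hsurj i hi k (Finset.mem_filter.mp hk).1
        exact ⟨l, Finset.mem_filter.mpr ⟨hl, (Finset.mem_filter.mp hk).2⟩, rfl⟩
    have hk0iff : ∀ l, 1 ≤ l → l ≤ K → (c (σ i l) i < c 0 i ↔ l ≤ k0 i) := by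
      intro l h1 h2
      have h := downclosed_filter K (fun l => c (σ i l) i < c 0 i) hdc l h1 h2
      rwa [hcard] at h
    have hms0 : ∀ t ∈ Icc 1 T, mstar 0 t i = S t i - ∑ k ∈ Icc 1 K, mstar k t i := by
      intro t ht
      have hd := hms_dem t ht i hi
      rw [hIcc0K, Finset.sum_insert hKicc] at hd
      linarith
    have hrearr : ∀ (mm : ℕ → ℕ → ℕ → ℝ),
        (∀ t ∈ Icc 1 T, mm 0 t i = S t i - ∑ k ∈ Icc 1 K, mm k t i) →
        ∑ t ∈ Icc 1 T, ∑ k ∈ Icc 0 K, c k i * mm k t i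
          = c 0 i * (∑ t ∈ Icc 1 T, S t i)
            + ∑ k ∈ Icc 1 K, (c k i - c 0 i) * ∑ t ∈ Icc 1 T, mm k t i := by
      intro mm hmm0
      have hper : ∀ t ∈ Icc 1 T, ∑ k ∈ Icc 0 K, c k i * mm k t i
          = c 0 i * S t i + ∑ k ∈ Icc 1 K, (c k i - c 0 i) * mm k t i := by
        intro t ht
        rw [hIcc0K, Finset.sum_insert hKicc, hmm0 t ht]
        have h1 : ∑ k ∈ Icc 1 K, (c k i - c 0 i) * mm k t i
            = ∑ k ∈ Icc 1 K, c k i * mm k t i - ∑ k ∈ Icc 1 K, c 0 i * mm k t i := by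
          simp only [sub_mul]
          exact Finset.sum_sub_distrib _ _
        rw [h1, ← Finset.mul_sum]
        ring
      rw [Finset.sum_congr rfl hper, Finset.sum_add_distrib, ← Finset.mul_sum,
        Finset.sum_comm]
      congr 1
      exact Finset.sum_congr rfl fun k _ => (Finset.mul_sum _ _ _).symm
    have hpre : ∀ l, 1 ≤ l → l ≤ k0 i →
        ∑ l' ∈ Icc 1 l, ∑ t ∈ Icc 1 T, mstar (σ i l') t i
          ≤ ∑ l' ∈ Icc 1 l, ∑ t ∈ Icc 1 T, mhat (σ i l') t i := by
      intro l h1 hlk0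
      have hk0' := hk0K i hi
      have hσK : ∀ l' ∈ Icc 1 l, σ i l' ∈ Icc 1 K := by
        intro l' hl'
        have hm := Finset.mem_Icc.mp hl'
        exact hσ_mem i hi l' (Finset.mem_Icc.mpr ⟨hm.1, by omega⟩)
      have hA : ∑ l' ∈ Icc 1 l, ∑ t ∈ Icc 1 T, mstar (σ i l') t i
          ≤ ∑ l' ∈ Icc 1 l, I0 (σ i l') i :=
        Finset.sum_le_sum fun l' hl' => hms_inv (σ i l') (hσK l' hl') i hi
      have hD : ∑ l' ∈ Icc 1 l, ∑ t ∈ Icc 1 T, mstar (σ i l') t i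
          ≤ ∑ t ∈ Icc 1 T, S t i := by
        have s1 : ∑ l' ∈ Icc 1 l, ∑ t ∈ Icc 1 T, mstar (σ i l') t i
            ≤ ∑ l' ∈ Icc 1 K, ∑ t ∈ Icc 1 T, mstar (σ i l') t i := by
          apply Finset.sum_le_sum_of_subset_of_nonneg
            (Finset.Icc_subset_Icc_right (by omega))
          intro l' hl' _
          exact Finset.sum_nonneg fun t ht =>
            hms_nonneg (σ i l') (h0K _ (hσ_mem i hi l' hl')) t ht i hi
        have s2 : ∑ l' ∈ Icc 1 K, ∑ t ∈ Icc 1 T, mstar (σ i l') t i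
            = ∑ k ∈ Icc 1 K, ∑ t ∈ Icc 1 T, mstar k t i :=
          reindex_sum K (σ i) (hσ_mem i hi) (hσ_inj i hi)
            (fun k => ∑ t ∈ Icc 1 T, mstar k t i)
        have s3 : ∑ k ∈ Icc 1 K, ∑ t ∈ Icc 1 T, mstar k t i
            = ∑ t ∈ Icc 1 T, ∑ k ∈ Icc 1 K, mstar k t i := Finset.sum_comm
        have s4 : ∑ t ∈ Icc 1 T, ∑ k ∈ Icc 1 K, mstar k t i ≤ ∑ t ∈ Icc 1 T, S t i := by
          apply Finset.sum_le_sum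
          intro t ht
          have hd := hms_dem t ht i hi
          rw [hIcc0K, Finset.sum_insert hKicc] at hd
          have := hms_nonneg 0 h00K t ht i hi
          linarith
        linarith
      have hIC : ∀ τ, τ ≤ T → ∑ l' ∈ Icc 1 l, I (σ i l') τ i
          = (∑ l' ∈ Icc 1 l, I0 (σ i l') i)
            - ∑ τ' ∈ Icc 1 τ, ∑ l' ∈ Icc 1 l, m (σ i l') τ' i := by
        intro τ hτ
        have e1 : ∑ l' ∈ Icc 1 l, I (σ i l') τ i
            = ∑ l' ∈ Icc 1 l, (I0 (σ i l') i - ∑ τ' ∈ Icc 1 τ, m (σ i l') τ' i) :=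
          Finset.sum_congr rfl fun l' hl' => hI (σ i l') (hσK l' hl') τ i hi
        rw [e1, Finset.sum_sub_distrib]
        congr 1
        exact Finset.sum_comm
      have hGstep : ∀ τ, τ < T →
          (∑ τ' ∈ Icc 1 (τ+1), ∑ l' ∈ Icc 1 l, mhat (σ i l') τ' i)
            = (∑ τ' ∈ Icc 1 τ, ∑ l' ∈ Icc 1 l, mhat (σ i l') τ' i)
              + min (S (τ+1) i) ((∑ l' ∈ Icc 1 l, I0 (σ i l') i)
                - ∑ τ' ∈ Icc 1 τ, ∑ l' ∈ Icc 1 l, m (σ i l') τ' i) := by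
        intro τ hτ
        rw [Finset.sum_Icc_succ_top (by omega : 1 ≤ τ+1)]
        congr 1
        rw [mhatp i hi τ hτ l hlk0, hIC τ (by omega)]
      have hCstep : ∀ τ, τ < T →
          (∑ τ' ∈ Icc 1 (τ+1), ∑ l' ∈ Icc 1 l, m (σ i l') τ' i)
            = (∑ τ' ∈ Icc 1 τ, ∑ l' ∈ Icc 1 l, m (σ i l') τ' i) ∨
          (∑ τ' ∈ Icc 1 (τ+1), ∑ l' ∈ Icc 1 l, m (σ i l') τ' i)
            = (∑ τ' ∈ Icc 1 τ, ∑ l' ∈ Icc 1 l, m (σ i l') τ' i)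
              + min (S (τ+1) i) ((∑ l' ∈ Icc 1 l, I0 (σ i l') i)
                - ∑ τ' ∈ Icc 1 τ, ∑ l' ∈ Icc 1 l, m (σ i l') τ' i) := by
        intro τ hτ
        have hτT : (τ+1) ∈ Icc 1 T := Finset.mem_Icc.mpr ⟨by omega, by omega⟩
        rcases mcase (τ+1) hτT with ⟨_, hc⟩ | ⟨_, _, hc⟩
        · right
          rw [Finset.sum_Icc_succ_top (by omega : 1 ≤ τ+1)]
          congr 1
          have e2 : ∑ l' ∈ Icc 1 l, m (σ i l') (τ+1) i
              = ∑ l' ∈ Icc 1 l, mhat (σ i l') (τ+1) i :=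
            Finset.sum_congr rfl fun l' hl' => hc (σ i l') (h0K _ (hσK l' hl')) i hi
          rw [e2, mhatp i hi τ hτ l hlk0, hIC τ (by omega)]
        · left
          rw [Finset.sum_Icc_succ_top (by omega : 1 ≤ τ+1)]
          have e2 : ∑ l' ∈ Icc 1 l, m (σ i l') (τ+1) i = 0 :=
            Finset.sum_eq_zero fun l' hl' => hc (σ i l') (hσK l' hl') i hi
          rw [e2, add_zero]
      have hCle : ∀ τ, τ ≤ T →
          (∑ τ' ∈ Icc 1 τ, ∑ l' ∈ Icc 1 l, m (σ i l') τ' i)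
            ≤ ∑ l' ∈ Icc 1 l, I0 (σ i l') i := by
        intro τ hτ
        have h5 : 0 ≤ ∑ l' ∈ Icc 1 l, I (σ i l') τ i :=
          Finset.sum_nonneg fun l' hl' => minv τ hτ (σ i l') (hσK l' hl') i hi
        rw [hIC τ hτ] at h5
        linarith
      have hg := greedy_cum T (∑ l' ∈ Icc 1 l, I0 (σ i l') i) (fun τ => S τ i)
        (fun τ => ∑ τ' ∈ Icc 1 τ, ∑ l' ∈ Icc 1 l, mhat (σ i l') τ' i)
        (fun τ => ∑ τ' ∈ Icc 1 τ, ∑ l' ∈ Icc 1 l, m (σ i l') τ' i)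
        (show (∑ τ' ∈ Icc 1 0, ∑ l' ∈ Icc 1 l, mhat (σ i l') τ' i) = 0 by
          rw [Finset.Icc_eq_empty (by omega)]; exact Finset.sum_empty)
        (show (∑ τ' ∈ Icc 1 0, ∑ l' ∈ Icc 1 l, m (σ i l') τ' i) = 0 by
          rw [Finset.Icc_eq_empty (by omega)]; exact Finset.sum_empty)
        (fun τ ha hb => hS τ (Finset.mem_Icc.mpr ⟨ha, hb⟩) i hi)
        hGstep hCstep hCle T le_rfl
      have hGT : ∑ τ' ∈ Icc 1 T, ∑ l' ∈ Icc 1 l, mhat (σ i l') τ' i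
          = ∑ l' ∈ Icc 1 l, ∑ t ∈ Icc 1 T, mhat (σ i l') t i := Finset.sum_comm
      have hfinal : min (∑ τ ∈ Icc 1 T, S τ i) (∑ l' ∈ Icc 1 l, I0 (σ i l') i)
          ≤ ∑ l' ∈ Icc 1 l, ∑ t ∈ Icc 1 T, mhat (σ i l') t i := by
        rw [← hGT]
        exact hg.2
      exact le_trans (le_min hD hA) hfinal
    have hsuff : ∑ k ∈ Icc 1 K, (c 0 i - c k i) * ∑ t ∈ Icc 1 T, mstar k t i
        ≤ ∑ k ∈ Icc 1 K, (c 0 i - c k i) * ∑ t ∈ Icc 1 T, mhat k t i := by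
      have e1 : ∑ k ∈ Icc 1 K, (c 0 i - c k i) * ∑ t ∈ Icc 1 T, mstar k t i
          = ∑ l ∈ Icc 1 K, (c 0 i - c (σ i l) i) * ∑ t ∈ Icc 1 T, mstar (σ i l) t i :=
        (reindex_sum K (σ i) (hσ_mem i hi) (hσ_inj i hi)
          (fun k => (c 0 i - c k i) * ∑ t ∈ Icc 1 T, mstar k t i)).symm
      have e2 : ∑ k ∈ Icc 1 K, (c 0 i - c k i) * ∑ t ∈ Icc 1 T, mhat k t i
          = ∑ l ∈ Icc 1 K, (c 0 i - c (σ i l) i) * ∑ t ∈ Icc 1 T, mhat (σ i l) t i :=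
        (reindex_sum K (σ i) (hσ_mem i hi) (hσ_inj i hi)
          (fun k => (c 0 i - c k i) * ∑ t ∈ Icc 1 T, mhat k t i)).symm
      rw [e1, e2,
        sum_Icc_split (k0 i) K (hk0K i hi)
          (fun l => (c 0 i - c (σ i l) i) * ∑ t ∈ Icc 1 T, mstar (σ i l) t i),
        sum_Icc_split (k0 i) K (hk0K i hi)
          (fun l => (c 0 i - c (σ i l) i) * ∑ t ∈ Icc 1 T, mhat (σ i l) t i)]
      have htail0 : ∑ l ∈ Icc (k0 i + 1) K,
          (c 0 i - c (σ i l) i) * ∑ t ∈ Icc 1 T, mhat (σ i l) t i = 0 := by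
        apply Finset.sum_eq_zero
        intro l hl
        have h1 : ∑ t ∈ Icc 1 T, mhat (σ i l) t i = 0 :=
          Finset.sum_eq_zero fun t ht => hmhat' i hi t ht l hl
        rw [h1, mul_zero]
      have htailnp : ∑ l ∈ Icc (k0 i + 1) K,
          (c 0 i - c (σ i l) i) * ∑ t ∈ Icc 1 T, mstar (σ i l) t i ≤ 0 := by
        apply Finset.sum_nonpos
        intro l hl
        have hlm := Finset.mem_Icc.mp hl
        have hw : c 0 i - c (σ i l) i ≤ 0 := by
          have h2 := hk0iff l (by omega) hlm.2
          have h3 : ¬ c (σ i l) i < c 0 i := by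
            intro hcontra
            have := h2.mp hcontra
            omega
          have h4 := not_lt.mp h3
          linarith
        have hnn : 0 ≤ ∑ t ∈ Icc 1 T, mstar (σ i l) t i :=
          Finset.sum_nonneg fun t ht => hms_nonneg (σ i l)
            (h0K _ (hσ_mem i hi l (Finset.mem_Icc.mpr ⟨by omega, hlm.2⟩))) t ht i hi
        exact mul_nonpos_iff.mpr (Or.inr ⟨hw, hnn⟩)
      have hhead : ∑ l ∈ Icc 1 (k0 i),
            (c 0 i - c (σ i l) i) * ∑ t ∈ Icc 1 T, mstar (σ i l) t i
          ≤ ∑ l ∈ Icc 1 (k0 i),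
            (c 0 i - c (σ i l) i) * ∑ t ∈ Icc 1 T, mhat (σ i l) t i := by
        apply abel_compare (k0 i) (fun l => c 0 i - c (σ i l) i)
          (fun l => ∑ t ∈ Icc 1 T, mhat (σ i l) t i)
          (fun l => ∑ t ∈ Icc 1 T, mstar (σ i l) t i)
        · intro l h1 h2
          have hk0' := hk0K i hi
          have h3 := (hσ_sorted i hi l h1 (by omega)).1
          linarith
        · intro h1
          have h2 := (hk0iff (k0 i) h1 (hk0K i hi)).mpr le_rfl
          linarith
        · intro l h1 h2
          exact hpre l h1 h2
      linarith
    have hneg1 : ∑ k ∈ Icc 1 K, (c k i - c 0 i) * ∑ t ∈ Icc 1 T, mhat k t i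
        = - ∑ k ∈ Icc 1 K, (c 0 i - c k i) * ∑ t ∈ Icc 1 T, mhat k t i := by
      rw [← Finset.sum_neg_distrib]
      exact Finset.sum_congr rfl fun k _ => by ring
    have hneg2 : ∑ k ∈ Icc 1 K, (c k i - c 0 i) * ∑ t ∈ Icc 1 T, mstar k t i
        = - ∑ k ∈ Icc 1 K, (c 0 i - c k i) * ∑ t ∈ Icc 1 T, mstar k t i := by
      rw [← Finset.sum_neg_distrib]
      exact Finset.sum_congr rfl fun k _ => by ring
    rw [hrearr mhat (fun t ht => hmhat0 t ht i hi), hrearr mstar hms0, hneg1, hneg2]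
    linarith

  have stepA : ∑ t ∈ (Icc 1 T).filter (fun t => ∀ k ∈ Icc 1 K, ∀ i ∈ Icc 1 n, mstar k t i = 0), (∑ k ∈ Icc 0 K, (f k * (if 0 < ∑ i ∈ Icc 1 n, m k t i then (1:ℝ) else 0) + ∑ i ∈ Icc 1 n, c k i * m k t i)) ≤ ∑ t ∈ (Icc 1 T).filter (fun t => ∀ k ∈ Icc 1 K, ∀ i ∈ Icc 1 n, mstar k t i = 0), (∑ k ∈ Icc 0 K, (f k * (if 0 < ∑ i ∈ Icc 1 n, mstar k t i then (1:ℝ) else 0) + ∑ i ∈ Icc 1 n, c k i * mstar k t i)) :=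
    Finset.sum_le_sum fun t ht =>
      caseA t (Finset.filter_subset _ _ ht) (Finset.mem_filter.mp ht).2
  have stepB : ∑ t ∈ (Icc 1 T).filter (fun t => ¬ ∀ k ∈ Icc 1 K, ∀ i ∈ Icc 1 n, mstar k t i = 0), (∑ k ∈ Icc 0 K, (f k * (if 0 < ∑ i ∈ Icc 1 n, m k t i then (1:ℝ) else 0) + ∑ i ∈ Icc 1 n, c k i * m k t i))
      ≤ ∑ t ∈ (Icc 1 T).filter (fun t => ¬ ∀ k ∈ Icc 1 K, ∀ i ∈ Icc 1 n, mstar k t i = 0), (R * (∑ k ∈ Icc 0 K, f k * (if 0 < ∑ i ∈ Icc 1 n, mstar k t i then (1:ℝ) else 0)) + (∑ k ∈ Icc 0 K, ∑ i ∈ Icc 1 n, c k i * mhat k t i)) := by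
    apply Finset.sum_le_sum
    intro t ht
    have htT : t ∈ Icc 1 T := Finset.filter_subset _ _ ht
    have hq := (Finset.mem_filter.mp ht).2
    have h1 := (hPHD t htT).1
    have h2 := hHF t htT
    have h3 := caseB t htT hq
    have h4 : f 0 + ∑ k ∈ Icc 1 K, f k ≤ R * (∑ k ∈ Icc 0 K, f k * (if 0 < ∑ i ∈ Icc 1 n, mstar k t i then (1:ℝ) else 0)) :=
      le_trans hRf (mul_le_mul_of_nonneg_left h3 hR0)
    linarith
  have stepB2 : ∑ t ∈ (Icc 1 T).filter (fun t => ¬ ∀ k ∈ Icc 1 K, ∀ i ∈ Icc 1 n, mstar k t i = 0), (R * (∑ k ∈ Icc 0 K, f k * (if 0 < ∑ i ∈ Icc 1 n, mstar k t i then (1:ℝ) else 0)) + (∑ k ∈ Icc 0 K, ∑ i ∈ Icc 1 n, c k i * mhat k t i))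
      = ∑ t ∈ (Icc 1 T).filter (fun t => ¬ ∀ k ∈ Icc 1 K, ∀ i ∈ Icc 1 n, mstar k t i = 0), R * (∑ k ∈ Icc 0 K, f k * (if 0 < ∑ i ∈ Icc 1 n, mstar k t i then (1:ℝ) else 0)) + ∑ t ∈ (Icc 1 T).filter (fun t => ¬ ∀ k ∈ Icc 1 K, ∀ i ∈ Icc 1 n, mstar k t i = 0), (∑ k ∈ Icc 0 K, ∑ i ∈ Icc 1 n, c k i * mhat k t i) := Finset.sum_add_distrib
  have stepB3 : ∑ t ∈ (Icc 1 T).filter (fun t => ¬ ∀ k ∈ Icc 1 K, ∀ i ∈ Icc 1 n, mstar k t i = 0), (∑ k ∈ Icc 0 K, ∑ i ∈ Icc 1 n, c k i * mhat k t i) ≤ ∑ t ∈ Icc 1 T, (∑ k ∈ Icc 0 K, ∑ i ∈ Icc 1 n, c k i * mhat k t i) :=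
    Finset.sum_le_sum_of_subset_of_nonneg (Finset.filter_subset _ _)
      (fun t ht _ => hVH_nonneg t ht)
  have stepA2 : ∑ t ∈ (Icc 1 T).filter (fun t => ∀ k ∈ Icc 1 K, ∀ i ∈ Icc 1 n, mstar k t i = 0), (∑ k ∈ Icc 0 K, (f k * (if 0 < ∑ i ∈ Icc 1 n, mstar k t i then (1:ℝ) else 0) + ∑ i ∈ Icc 1 n, c k i * mstar k t i)) + ∑ t ∈ (Icc 1 T).filter (fun t => ∀ k ∈ Icc 1 K, ∀ i ∈ Icc 1 n, mstar k t i = 0), (∑ k ∈ Icc 0 K, ∑ i ∈ Icc 1 n, c k i * mstar k t i)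
      ≤ R * ∑ t ∈ (Icc 1 T).filter (fun t => ∀ k ∈ Icc 1 K, ∀ i ∈ Icc 1 n, mstar k t i = 0), (∑ k ∈ Icc 0 K, (f k * (if 0 < ∑ i ∈ Icc 1 n, mstar k t i then (1:ℝ) else 0) + ∑ i ∈ Icc 1 n, c k i * mstar k t i)) := by
    have h1 : ∑ t ∈ (Icc 1 T).filter (fun t => ∀ k ∈ Icc 1 K, ∀ i ∈ Icc 1 n, mstar k t i = 0), (∑ k ∈ Icc 0 K, ∑ i ∈ Icc 1 n, c k i * mstar k t i) ≤ ∑ t ∈ (Icc 1 T).filter (fun t => ∀ k ∈ Icc 1 K, ∀ i ∈ Icc 1 n, mstar k t i = 0), (∑ k ∈ Icc 0 K, (f k * (if 0 < ∑ i ∈ Icc 1 n, mstar k t i then (1:ℝ) else 0) + ∑ i ∈ Icc 1 n, c k i * mstar k t i)) := by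
      apply Finset.sum_le_sum
      intro t ht
      have h5 := hOsplit t
      have h6 := hFS_nonneg t (Finset.filter_subset _ _ ht)
      linarith
    have h2 : 0 ≤ ∑ t ∈ (Icc 1 T).filter (fun t => ∀ k ∈ Icc 1 K, ∀ i ∈ Icc 1 n, mstar k t i = 0), (∑ k ∈ Icc 0 K, (f k * (if 0 < ∑ i ∈ Icc 1 n, mstar k t i then (1:ℝ) else 0) + ∑ i ∈ Icc 1 n, c k i * mstar k t i)) :=
      Finset.sum_nonneg fun t ht => hO_nonneg t (Finset.filter_subset _ _ ht)
    nlinarith [mul_le_mul_of_nonneg_right hR2 h2]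
  have stepB4 : ∑ t ∈ (Icc 1 T).filter (fun t => ¬ ∀ k ∈ Icc 1 K, ∀ i ∈ Icc 1 n, mstar k t i = 0), R * (∑ k ∈ Icc 0 K, f k * (if 0 < ∑ i ∈ Icc 1 n, mstar k t i then (1:ℝ) else 0)) + ∑ t ∈ (Icc 1 T).filter (fun t => ¬ ∀ k ∈ Icc 1 K, ∀ i ∈ Icc 1 n, mstar k t i = 0), (∑ k ∈ Icc 0 K, ∑ i ∈ Icc 1 n, c k i * mstar k t i)
      ≤ R * ∑ t ∈ (Icc 1 T).filter (fun t => ¬ ∀ k ∈ Icc 1 K, ∀ i ∈ Icc 1 n, mstar k t i = 0), (∑ k ∈ Icc 0 K, (f k * (if 0 < ∑ i ∈ Icc 1 n, mstar k t i then (1:ℝ) else 0) + ∑ i ∈ Icc 1 n, c k i * mstar k t i)) := by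
    have h1 : ∑ t ∈ (Icc 1 T).filter (fun t => ¬ ∀ k ∈ Icc 1 K, ∀ i ∈ Icc 1 n, mstar k t i = 0), R * (∑ k ∈ Icc 0 K, f k * (if 0 < ∑ i ∈ Icc 1 n, mstar k t i then (1:ℝ) else 0)) + ∑ t ∈ (Icc 1 T).filter (fun t => ¬ ∀ k ∈ Icc 1 K, ∀ i ∈ Icc 1 n, mstar k t i = 0), (∑ k ∈ Icc 0 K, ∑ i ∈ Icc 1 n, c k i * mstar k t i)
        = ∑ t ∈ (Icc 1 T).filter (fun t => ¬ ∀ k ∈ Icc 1 K, ∀ i ∈ Icc 1 n, mstar k t i = 0), (R * (∑ k ∈ Icc 0 K, f k * (if 0 < ∑ i ∈ Icc 1 n, mstar k t i then (1:ℝ) else 0)) + (∑ k ∈ Icc 0 K, ∑ i ∈ Icc 1 n, c k i * mstar k t i)) := Finset.sum_add_distrib.symm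
    have h2 : ∑ t ∈ (Icc 1 T).filter (fun t => ¬ ∀ k ∈ Icc 1 K, ∀ i ∈ Icc 1 n, mstar k t i = 0), (R * (∑ k ∈ Icc 0 K, f k * (if 0 < ∑ i ∈ Icc 1 n, mstar k t i then (1:ℝ) else 0)) + (∑ k ∈ Icc 0 K, ∑ i ∈ Icc 1 n, c k i * mstar k t i))
        ≤ ∑ t ∈ (Icc 1 T).filter (fun t => ¬ ∀ k ∈ Icc 1 K, ∀ i ∈ Icc 1 n, mstar k t i = 0), (R * (∑ k ∈ Icc 0 K, (f k * (if 0 < ∑ i ∈ Icc 1 n, mstar k t i then (1:ℝ) else 0) + ∑ i ∈ Icc 1 n, c k i * mstar k t i))) := by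
      apply Finset.sum_le_sum
      intro t ht
      have hsp := hOsplit t
      have hv := hVS_nonneg t (Finset.filter_subset _ _ ht)
      rw [hsp, mul_add]
      nlinarith [mul_nonneg (by linarith : (0:ℝ) ≤ R - 1) hv]
    have h3 : ∑ t ∈ (Icc 1 T).filter (fun t => ¬ ∀ k ∈ Icc 1 K, ∀ i ∈ Icc 1 n, mstar k t i = 0), (R * (∑ k ∈ Icc 0 K, (f k * (if 0 < ∑ i ∈ Icc 1 n, mstar k t i then (1:ℝ) else 0) + ∑ i ∈ Icc 1 n, c k i * mstar k t i))) = R * ∑ t ∈ (Icc 1 T).filter (fun t => ¬ ∀ k ∈ Icc 1 K, ∀ i ∈ Icc 1 n, mstar k t i = 0), (∑ k ∈ Icc 0 K, (f k * (if 0 < ∑ i ∈ Icc 1 n, mstar k t i then (1:ℝ) else 0) + ∑ i ∈ Icc 1 n, c k i * mstar k t i)) :=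
      (Finset.mul_sum _ _ _).symm
    linarith
  have hsplitP := Finset.sum_filter_add_sum_filter_not (Icc 1 T) (fun t => ∀ k ∈ Icc 1 K, ∀ i ∈ Icc 1 n, mstar k t i = 0) (fun t => ∑ k ∈ Icc 0 K, (f k * (if 0 < ∑ i ∈ Icc 1 n, m k t i then (1:ℝ) else 0) + ∑ i ∈ Icc 1 n, c k i * m k t i))
  have hsplitO := Finset.sum_filter_add_sum_filter_not (Icc 1 T) (fun t => ∀ k ∈ Icc 1 K, ∀ i ∈ Icc 1 n, mstar k t i = 0) (fun t => ∑ k ∈ Icc 0 K, (f k * (if 0 < ∑ i ∈ Icc 1 n, mstar k t i then (1:ℝ) else 0) + ∑ i ∈ Icc 1 n, c k i * mstar k t i))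
  have hsplitVS := Finset.sum_filter_add_sum_filter_not (Icc 1 T) (fun t => ∀ k ∈ Icc 1 K, ∀ i ∈ Icc 1 n, mstar k t i = 0) (fun t => ∑ k ∈ Icc 0 K, ∑ i ∈ Icc 1 n, c k i * mstar k t i)
  have hlast : R * (∑ t ∈ (Icc 1 T).filter (fun t => ∀ k ∈ Icc 1 K, ∀ i ∈ Icc 1 n, mstar k t i = 0), (∑ k ∈ Icc 0 K, (f k * (if 0 < ∑ i ∈ Icc 1 n, mstar k t i then (1:ℝ) else 0) + ∑ i ∈ Icc 1 n, c k i * mstar k t i)) + ∑ t ∈ (Icc 1 T).filter (fun t => ¬ ∀ k ∈ Icc 1 K, ∀ i ∈ Icc 1 n, mstar k t i = 0), (∑ k ∈ Icc 0 K, (f k * (if 0 < ∑ i ∈ Icc 1 n, mstar k t i then (1:ℝ) else 0) + ∑ i ∈ Icc 1 n, c k i * mstar k t i)))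
      = R * ∑ t ∈ Icc 1 T, (∑ k ∈ Icc 0 K, (f k * (if 0 < ∑ i ∈ Icc 1 n, mstar k t i then (1:ℝ) else 0) + ∑ i ∈ Icc 1 n, c k i * mstar k t i)) := by rw [hsplitO]
  linarith [hsplitP, key, hsplitVS, stepA, stepB, stepB2, stepB3, stepA2, stepB4, hlast]
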